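/- Sorting a cycle by Whitney switches corresponds to sorting a circular permutation by reversals: let G be a cycle with vertices v₁,…,vₙ (n ≥ 4) in cyclic order and edges eᵢ = v_{i−1}vᵢ (indices mod n), and let 1 ≤ i < j ≤ n with vᵢ, vⱼ non-adjacent. Then (A,B) with A = {v₁,…,vᵢ} ∪ {vⱼ,…,vₙ} and B = {vᵢ,…,vⱼ} is a Whitney separation of G, and the Whitney switch with respect to (A,B) produces the cycle whose cyclic edge order is obtained from (e₁,…,eₙ) by the circular reversal ρᶜ(i+1,j). -/

import Mathlib

open SimpleGraph
open Fin.NatCast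

/-- A graph is 2-connected: connected, at least 3 vertices, no cut vertex. -/
def TwoConnected {V : Type*} [Fintype V] (G : SimpleGraph V) : Prop :=
  G.Connected ∧ 3 ≤ Fintype.card V ∧ ∀ v : V, (G.induce ({v}ᶜ : Set V)).Connected

/-- `(A,B)` is a Whitney separation of `G`: `A ∪ B = V(G)`, `A∖B ≠ ∅ ≠ B∖A`,
`|A ∩ B| = 2`, and no edge joins `A∖B` to `B∖A`. -/
def WhitneySep {V : Type*} (G : SimpleGraph V) (A B : Set V) : Prop :=
  A ∪ B = Set.univ ∧ (A \ B).Nonempty ∧ (B \ A).Nonempty ∧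
    (∃ u v : V, u ≠ v ∧ A ∩ B = {u, v}) ∧
    ∀ x ∈ A \ B, ∀ y ∈ B \ A, ¬G.Adj x y

open Classical in
/-- The Whitney switch with respect to a Whitney separation with side `B` and
separator `{u,v}`: for every `w ∈ B ∖ {u,v}`, each edge `uw` is replaced by `vw`
and each edge `vw` by `uw`; all other edges are unchanged. -/
noncomputable def wswitch {V : Type*} (G : SimpleGraph V) (B : Set V) (u v : V) :
    SimpleGraph V where
  Adj x y :=
    if x ∈ B \ {u, v} ∨ y ∈ B \ {u, v} then
      G.Adj (Equiv.swap u v x) (Equiv.swap u v y)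
    else G.Adj x y
  symm := by
    constructor
    intro x y hxy
    by_cases hc : x ∈ B \ {u, v} ∨ y ∈ B \ {u, v}
    · rw [if_pos hc] at hxy
      rw [if_pos hc.symm]
      exact hxy.symm
    · rw [if_neg hc] at hxy
      rw [if_neg fun hcc => hc hcc.symm]
      exact hxy.symm
  loopless := by
    constructor
    intro x hx
    by_cases hc : x ∈ B \ {u, v} ∨ x ∈ B \ {u, v}
    · rw [if_pos hc] at hx
      exact G.loopless.irrefl _ hx
    · rw [if_neg hc] at hx
      exact G.loopless.irrefl _ hx

open Classical in
/-- The edge map induced by the Whitney switch: an edge with an endpoint in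
`B ∖ A` has its endpoints `u` and `v` swapped; every other edge is kept as itself. -/
noncomputable def switchEdgeMap {V : Type*} (B A : Set V) (u v : V)
    (e : Sym2 V) : Sym2 V :=
  if ∃ x, x ∈ e ∧ x ∈ B \ A then Sym2.map (Equiv.swap u v) e else e

/-- The cycle graph on `Fin n`: `x` and `y` are adjacent iff they are distinct and
consecutive modulo `n`. -/
def cyc (n : ℕ) [NeZero n] : SimpleGraph (Fin n) where
  Adj x y := x ≠ y ∧ (y = x + 1 ∨ x = y + 1)
  symm := by
    constructor
    intro x y h
    exact ⟨h.1.symm, h.2.symm⟩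
  loopless := by
    constructor
    intro x h
    exact h.1 rfl

open Classical in
theorem wswitch_adj {V : Type*} (G : SimpleGraph V) (B : Set V) (u v : V) (x y : V) :
    (wswitch G B u v).Adj x y ↔
      if x ∈ B \ {u, v} ∨ y ∈ B \ {u, v} then G.Adj (Equiv.swap u v x) (Equiv.swap u v y)
      else G.Adj x y := Iff.rfl

/-- Sorting a cycle by Whitney switches corresponds to sorting a circular
permutation by reversals: for the cycle with vertices `v₁,…,vₙ` (`n ≥ 4`,
`v k = (k : Fin n)`, so `v 0 = v n`) and edges `e k = s(v (k-1), v k)`, and for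
`1 ≤ i < j ≤ n` with `vᵢ, vⱼ` non-adjacent, the pair `(A,B)` with
`A = {v₁,…,vᵢ} ∪ {vⱼ,…,vₙ}` and `B = {vᵢ,…,vⱼ}` is a Whitney separation with
separator `{vᵢ, vⱼ}`, and the Whitney switch with respect to `(A,B)` produces the
cycle whose cyclic edge order `M` is obtained from `(e₁,…,eₙ)` by the circular
reversal `ρᶜ(i+1,j)`: the edge set of the switched graph consists exactly of the
entries of `M`, and cyclically consecutive entries of `M` share a vertex. -/
theorem stmt15 (n : ℕ) [NeZero n] (hn : 4 ≤ n) (i j : ℕ)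
    (hi : 1 ≤ i) (hij : i < j) (hj : j ≤ n)
    (hnonadj : ¬(cyc n).Adj ((i : Fin n)) ((j : Fin n)))
    (A B : Set (Fin n))
    (hA : A = (fun k : ℕ => (k : Fin n)) '' {k | 1 ≤ k ∧ k ≤ i} ∪
      (fun k : ℕ => (k : Fin n)) '' {k | j ≤ k ∧ k ≤ n})
    (hB : B = (fun k : ℕ => (k : Fin n)) '' {k | i ≤ k ∧ k ≤ j})
    (e : ℕ → Sym2 (Fin n))
    (he : ∀ k : ℕ, e k = s(((k - 1 : ℕ) : Fin n), (k : Fin n)))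
    (L M : List (Sym2 (Fin n)))
    (hL : L = (List.range n).map fun t => e (t + 1))
    (hM : M = (L.take i ++ ((L.drop i).take (j - i)).reverse ++ L.drop j).map
      (switchEdgeMap B A ((i : Fin n)) ((j : Fin n)))) :
    (WhitneySep (cyc n) A B ∧ A ∩ B = {((i : Fin n)), ((j : Fin n))}) ∧
    (wswitch (cyc n) B ((i : Fin n)) ((j : Fin n))).edgeSet = {ed | ed ∈ M} ∧
    ∀ k : ℕ, k < n → ∃ x : Fin n,
      x ∈ M.getD k (e 1) ∧ x ∈ M.getD ((k + 1) % n) (e 1) := by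
    classical
  have hx0 : ∀ x : Fin n, x = 0 ↔ x.val = 0 := fun x => by
    rw [Fin.ext_iff, Fin.val_zero]
  -- coercion injectivity helpers
  have hcastne : ∀ a b : ℕ, a < b → b ≤ n → b - a < n → ((a : Fin n)) ≠ ((b : Fin n)) := by
    intro a b hab hbn hd h
    have hh := congrArg Fin.val h
    rcases Nat.lt_or_ge b n with hbn' | hbn'
    · rw [Fin.val_cast_of_lt (by omega), Fin.val_cast_of_lt hbn'] at hh
      omega
    · have hbn'' : b = n := by omega
      rw [hbn''] at hh
      rw [Fin.natCast_self, Fin.val_cast_of_lt (by omega), Fin.val_zero] at hh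
      omega
  -- consequences of non-adjacency
  have h2 : i + 2 ≤ j := by
    by_contra hcon
    have hj1 : j = i + 1 := by omega
    apply hnonadj
    refine ⟨hcastne i j hij hj (by omega), Or.inl ?_⟩
    rw [hj1]
    push_cast
    ring
  have h3 : 2 ≤ i ∨ j + 1 ≤ n := by
    by_contra hcon
    push_neg at hcon
    obtain ⟨hi1, hjn⟩ := hcon
    have hi1' : i = 1 := by omega
    have hjn' : j = n := by omega
    apply hnonadj
    refine ⟨hcastne i j hij hj (by omega), Or.inr ?_⟩
    rw [hi1', hjn', Fin.natCast_self, zero_add, Nat.cast_one]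
  have hiltn : i < n := by omega
  have hi1ltn : i + 1 < n := by omega
  -- membership characterizations
  have hAc : ∀ x : Fin n, x ∈ A ↔ (1 ≤ x.val ∧ x.val ≤ i) ∨ j ≤ x.val ∨ x = 0 := by
    intro x
    rw [hA]
    simp only [Set.mem_union, Set.mem_image, Set.mem_setOf_eq]
    constructor
    · rintro (⟨k, ⟨hk1, hk2⟩, rfl⟩ | ⟨k, ⟨hk1, hk2⟩, rfl⟩)
      · rw [Fin.val_cast_of_lt (by omega)]
        exact Or.inl ⟨hk1, hk2⟩
      · rcases Nat.lt_or_ge k n with hk | hk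
        · rw [Fin.val_cast_of_lt hk]
          exact Or.inr (Or.inl hk1)
        · have hkn : k = n := by omega
          rw [hkn]
          exact Or.inr (Or.inr (Fin.natCast_self n))
    · rintro (⟨ha1, ha2⟩ | h | rfl)
      · exact Or.inl ⟨x.val, ⟨ha1, ha2⟩, Fin.cast_val_eq_self x⟩
      · exact Or.inr ⟨x.val, ⟨h, le_of_lt x.isLt⟩, Fin.cast_val_eq_self x⟩
      · exact Or.inr ⟨n, ⟨hj, le_refl n⟩, Fin.natCast_self n⟩
  have hBc : ∀ x : Fin n, x ∈ B ↔ (i ≤ x.val ∧ x.val ≤ j) ∨ (j = n ∧ x = 0) := by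
    intro x
    rw [hB]
    simp only [Set.mem_image, Set.mem_setOf_eq]
    constructor
    · rintro ⟨k, ⟨hk1, hk2⟩, rfl⟩
      rcases Nat.lt_or_ge k n with hk | hk
      · rw [Fin.val_cast_of_lt hk]
        exact Or.inl ⟨hk1, hk2⟩
      · have hkn : k = n := by omega
        rw [hkn]
        exact Or.inr ⟨by omega, Fin.natCast_self n⟩
    · rintro (⟨hb1, hb2⟩ | ⟨hjn, rfl⟩)
      · exact ⟨x.val, ⟨hb1, hb2⟩, Fin.cast_val_eq_self x⟩
      · exact ⟨n, ⟨by omega, by omega⟩, Fin.natCast_self n⟩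
  have hvi : ((i : Fin n)).val = i := Fin.val_cast_of_lt hiltn
  have hxvi : ∀ x : Fin n, x = (i : Fin n) ↔ x.val = i := by
    intro x
    rw [Fin.ext_iff, hvi]
  have hxvj : ∀ x : Fin n, x = (j : Fin n) ↔ ((j < n ∧ x.val = j) ∨ (j = n ∧ x.val = 0)) := by
    intro x
    rcases Nat.lt_or_ge j n with hjn | hjn
    · rw [Fin.ext_iff, Fin.val_cast_of_lt hjn]
      constructor
      · exact fun h => Or.inl ⟨hjn, h⟩
      · rintro (⟨_, h⟩ | ⟨h, _⟩) <;> omega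
    · have hjn' : j = n := by omega
      rw [hjn', Fin.natCast_self, hx0]
      constructor
      · exact fun h => Or.inr ⟨rfl, h⟩
      · rintro (⟨h, _⟩ | ⟨_, h⟩) <;> omega
  have hSc : ∀ x : Fin n, x ∈ B \ A ↔ (i < x.val ∧ x.val < j) := by
    intro x
    have hxlt := x.isLt
    rw [Set.mem_diff, hAc, hBc, hx0]
    omega
  have hS2 : ∀ x : Fin n,
      x ∈ B \ ({(i : Fin n), (j : Fin n)} : Set (Fin n)) ↔ (i < x.val ∧ x.val < j) := by
    intro x
    have hxlt := x.isLt
    rw [Set.mem_diff, hBc, hx0, Set.mem_insert_iff, Set.mem_singleton_iff, hxvi x, hxvj x]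
    omega
  have hne_uv : ((i : Fin n)) ≠ ((j : Fin n)) := hcastne i j hij hj (by omega)
  have hInter : A ∩ B = {((i : Fin n)), ((j : Fin n))} := by
    ext x
    have hxlt := x.isLt
    rw [Set.mem_inter_iff, hAc, hBc, hx0, Set.mem_insert_iff, Set.mem_singleton_iff,
      hxvi x, hxvj x]
    omega
  have hWhitney : WhitneySep (cyc n) A B := by
    refine ⟨?_, ?_, ?_, ⟨(i : Fin n), (j : Fin n), hne_uv, hInter⟩, ?_⟩
    · ext x
      have hxlt := x.isLt
      simp only [Set.mem_union, Set.mem_univ, iff_true, hAc, hBc, hx0]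
      omega
    · rcases h3 with h3 | h3
      · refine ⟨((1 : ℕ) : Fin n), ?_⟩
        rw [Set.mem_diff, hAc, hBc, hx0, Fin.val_cast_of_lt (by omega)]
        omega
      · refine ⟨(0 : Fin n), ?_⟩
        rw [Set.mem_diff, hAc, hBc, hx0, Fin.val_zero]
        omega
    · refine ⟨((i + 1 : ℕ) : Fin n), ?_⟩
      rw [hSc, Fin.val_cast_of_lt hi1ltn]
      omega
    · intro x hx y hy hadj
      rw [Set.mem_diff, hAc, hBc, hx0] at hx
      rw [hSc] at hy
      have hxlt := x.isLt
      have hylt := y.isLt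
      have h1v : ((1 : Fin n)).val = 1 := by
        rw [← Nat.cast_one, Fin.val_cast_of_lt (by omega)]
      have hvadd1 : ∀ z : Fin n, ((z + 1 : Fin n)).val = (z.val + 1) % n := by
        intro z
        rw [Fin.val_add, h1v]
      have hsplit : ∀ z w : Fin n, w = z + 1 →
          (w.val = z.val + 1 ∨ (z.val = n - 1 ∧ w.val = 0)) := by
        intro z w hzw
        have hc := congrArg Fin.val hzw
        rw [hvadd1] at hc
        rcases Nat.lt_or_ge (z.val + 1) n with hlt | hge
        · rw [Nat.mod_eq_of_lt hlt] at hc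
          exact Or.inl hc
        · have : z.val + 1 = n := by have := z.isLt; omega
          rw [this, Nat.mod_self] at hc
          right
          constructor <;> omega
      obtain ⟨hne, hor⟩ := hadj
      rcases hor with hc | hc
      · rcases hsplit x y hc with h | h <;> omega
      · rcases hsplit y x hc with h | h <;> omega
  -- swap lemmas
  have hσi : Equiv.swap ((i : Fin n)) ((j : Fin n)) ((i : Fin n)) = ((j : Fin n)) :=
    Equiv.swap_apply_left _ _
  have hσfix : ∀ x : Fin n, i < x.val → x.val < j →
      Equiv.swap ((i : Fin n)) ((j : Fin n)) x = x := by
    intro x ha hb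
    apply Equiv.swap_apply_of_ne_of_ne
    · rw [Ne, hxvi x]; omega
    · rw [Ne, hxvj x]; omega
  have hσσ : ∀ x : Fin n, Equiv.swap ((i : Fin n)) ((j : Fin n))
      (Equiv.swap ((i : Fin n)) ((j : Fin n)) x) = x := fun x =>
    Equiv.swap_apply_self _ _ x
  -- switchEdgeMap computation
  have hf_pos : ∀ a b : Fin n, ((i < a.val ∧ a.val < j) ∨ (i < b.val ∧ b.val < j)) →
      switchEdgeMap B A ((i : Fin n)) ((j : Fin n)) s(a, b) =
        s(Equiv.swap ((i : Fin n)) ((j : Fin n)) a,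
          Equiv.swap ((i : Fin n)) ((j : Fin n)) b) := by
    intro a b hab
    have hcond : ∃ z, z ∈ s(a, b) ∧ z ∈ B \ A := by
      rcases hab with h | h
      · exact ⟨a, Sym2.mem_mk_left a b, (hSc a).mpr h⟩
      · exact ⟨b, Sym2.mem_mk_right a b, (hSc b).mpr h⟩
    rw [switchEdgeMap, if_pos hcond, Sym2.map_pair_eq]
    congr!
  have hf_neg : ∀ a b : Fin n, ¬((i < a.val ∧ a.val < j) ∨ (i < b.val ∧ b.val < j)) →
      switchEdgeMap B A ((i : Fin n)) ((j : Fin n)) s(a, b) = s(a, b) := by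
    intro a b hab
    rw [switchEdgeMap, if_neg]
    rintro ⟨z, hz1, hz2⟩
    rw [Sym2.mem_iff] at hz1
    rw [hSc z] at hz2
    rcases hz1 with rfl | rfl
    · exact hab (Or.inl hz2)
    · exact hab (Or.inr hz2)
  have hLlen : L.length = n := by rw [hL]; simp
  have hLget : ∀ t : ℕ, (ht : t < n) → L[t]'(by omega) =
      s(((t : ℕ) : Fin n), ((t + 1 : ℕ) : Fin n)) := by
    intro t ht
    rw [List.getElem_of_eq hL (by omega)]
    simp only [List.getElem_map, List.getElem_range, he]
    rw [Nat.add_sub_cancel]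
  have hLmem : ∀ ed : Sym2 (Fin n), ed ∈ L ↔ ed ∈ (cyc n).edgeSet := by
    intro ed
    constructor
    · intro hed
      obtain ⟨t, ht, rfl⟩ := List.getElem_of_mem hed
      rw [hLlen] at ht
      rw [hLget t ht, SimpleGraph.mem_edgeSet]
      refine ⟨hcastne t (t + 1) (by omega) (by omega) (by omega), Or.inl ?_⟩
      push_cast
      ring
    · intro hed
      have hmem : ∀ x : Fin n, s(x, x + 1) ∈ L := by
        intro x
        have hx := x.isLt
        have hcomp : L[x.val]'(by omega) = s(x, x + 1) := by
          rw [hLget x.val hx]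
          have e1 : ((x.val : ℕ) : Fin n) = x := Fin.cast_val_eq_self x
          have e2 : ((x.val + 1 : ℕ) : Fin n) = x + 1 := by push_cast; rfl
          rw [e1, e2]
        rw [← hcomp]
        exact List.getElem_mem _
      induction ed using Sym2.ind with
      | _ x y =>
        rw [SimpleGraph.mem_edgeSet] at hed
        obtain ⟨hne, hor | hor⟩ := hed
        · rw [hor]; exact hmem x
        · rw [hor, Sym2.eq_swap]; exact hmem y
  have hperm : ∀ ed : Sym2 (Fin n),
      ed ∈ (L.take i ++ ((L.drop i).take (j - i)).reverse ++ L.drop j) ↔ ed ∈ L := by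
    intro ed
    have hsplit1 : L = L.take i ++ L.drop i := (List.take_append_drop i L).symm
    have hsplit2 : L.drop i = (L.drop i).take (j - i) ++ ((L.drop i).drop (j - i)) :=
      (List.take_append_drop _ _).symm
    have hdd : (L.drop i).drop (j - i) = L.drop j := by
      rw [List.drop_drop]
      congr 1
      omega
    rw [hdd] at hsplit2
    conv_rhs => rw [hsplit1, hsplit2]
    simp only [List.mem_append, List.mem_reverse]
    tauto
  have hMmem : ∀ ed : Sym2 (Fin n), ed ∈ M ↔
      ∃ a b : Fin n, (cyc n).Adj a b ∧
        switchEdgeMap B A ((i : Fin n)) ((j : Fin n)) s(a, b) = ed := by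
    intro ed
    rw [hM, List.mem_map]
    constructor
    · rintro ⟨ed', hed', rfl⟩
      rw [hperm ed', hLmem ed'] at hed'
      induction ed' using Sym2.ind with
      | _ a b =>
        rw [SimpleGraph.mem_edgeSet] at hed'
        exact ⟨a, b, hed', rfl⟩
    · rintro ⟨a, b, hab, rfl⟩
      exact ⟨s(a, b), (hperm _).mpr ((hLmem _).mpr ((SimpleGraph.mem_edgeSet (cyc n)).mpr hab)), rfl⟩
  have hwadj : ∀ x y : Fin n, (wswitch (cyc n) B ((i : Fin n)) ((j : Fin n))).Adj x y ↔
      (if x ∈ B \ {((i : Fin n)), ((j : Fin n))} ∨ y ∈ B \ {((i : Fin n)), ((j : Fin n))} then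
        (cyc n).Adj (Equiv.swap ((i : Fin n)) ((j : Fin n)) x)
          (Equiv.swap ((i : Fin n)) ((j : Fin n)) y)
      else (cyc n).Adj x y) := by
    intro x y
    rw [wswitch_adj]
    congr!
  have hEdge : (wswitch (cyc n) B ((i : Fin n)) ((j : Fin n))).edgeSet = {ed | ed ∈ M} := by
    ext ed
    induction ed using Sym2.ind with
    | _ x y =>
      rw [SimpleGraph.mem_edgeSet, Set.mem_setOf_eq, hMmem]
      rw [hwadj]
      by_cases hP : (i < x.val ∧ x.val < j) ∨ (i < y.val ∧ y.val < j)
      · rw [if_pos (by rw [hS2 x, hS2 y]; exact hP)]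
        constructor
        · intro h
          refine ⟨_, _, h, ?_⟩
          rw [hf_pos _ _ ?_, hσσ, hσσ]
          rcases hP with h' | h'
          · rw [hσfix x h'.1 h'.2]; exact Or.inl h'
          · rw [hσfix y h'.1 h'.2]; exact Or.inr h'
        · rintro ⟨a, b, hab, heq⟩
          by_cases hq : (i < a.val ∧ a.val < j) ∨ (i < b.val ∧ b.val < j)
          · rw [hf_pos a b hq] at heq
            rw [Sym2.eq_iff] at heq
            rcases heq with ⟨h1, h2⟩ | ⟨h1, h2⟩
            · rw [← h1, ← h2, hσσ, hσσ]; exact hab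
            · rw [← h1, ← h2, hσσ, hσσ]; exact hab.symm
          · rw [hf_neg a b hq] at heq
            exfalso
            rw [Sym2.eq_iff] at heq
            rcases heq with ⟨h1, h2⟩ | ⟨h1, h2⟩
            · subst h1; subst h2; exact hq hP
            · subst h1; subst h2; exact hq hP.symm
      · rw [if_neg (by rw [hS2 x, hS2 y]; exact hP)]
        constructor
        · intro h
          exact ⟨x, y, h, hf_neg x y hP⟩
        · rintro ⟨a, b, hab, heq⟩
          by_cases hq : (i < a.val ∧ a.val < j) ∨ (i < b.val ∧ b.val < j)
          · exfalso
            rw [hf_pos a b hq] at heq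
            rw [Sym2.eq_iff] at heq
            apply hP
            rcases hq with h' | h'
            · have hfa := hσfix a h'.1 h'.2
              rcases heq with ⟨h1, h2⟩ | ⟨h1, h2⟩
              · left; rw [← h1, hfa]; exact h'
              · right; rw [← h1, hfa]; exact h'
            · have hfb := hσfix b h'.1 h'.2
              rcases heq with ⟨h1, h2⟩ | ⟨h1, h2⟩
              · right; rw [← h2, hfb]; exact h'
              · left; rw [← h2, hfb]; exact h'
          · rw [hf_neg a b hq] at heq
            rw [Sym2.eq_iff] at heq
            rcases heq with ⟨h1, h2⟩ | ⟨h1, h2⟩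
            · rw [← h1, ← h2]; exact hab
            · rw [← h1, ← h2]; exact hab.symm
  refine ⟨⟨hWhitney, hInter⟩, hEdge, ?_⟩
  -- Part 3: consecutive entries of M share a vertex
  have htake_len : (L.take i).length = i := by rw [List.length_take, hLlen]; omega
  have hrev_len : (((L.drop i).take (j - i)).reverse).length = j - i := by
    rw [List.length_reverse, List.length_take, List.length_drop, hLlen]; omega
  have hdrop_len : (L.drop j).length = n - j := by rw [List.length_drop, hLlen]
  have hMlen : M.length = n := by
    rw [hM, List.length_map]
    simp only [List.length_append, htake_len, hrev_len, hdrop_len]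
    omega
  have hgetc : ∀ (a b : ℕ) (h : a = b) (ha : a < L.length), L[a]'ha = L[b]'(h ▸ ha) := by
    intro a b h ha
    cases h
    rfl
  -- getD computations in the three ranges
  have hcase1 : ∀ k : ℕ, k < i → M.getD k (e 1) =
      switchEdgeMap B A ((i : Fin n)) ((j : Fin n))
        s(((k : ℕ) : Fin n), ((k + 1 : ℕ) : Fin n)) := by
    intro k hk'
    have hk : k < n := by omega
    rw [List.getD_eq_getElem M (e 1) (by rw [hMlen]; omega)]
    rw [List.getElem_of_eq hM (by rw [hMlen]; omega)]
    rw [List.getElem_map]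
    congr 1
    rw [List.getElem_append_left (by rw [List.length_append, htake_len, hrev_len]; omega)]
    rw [List.getElem_append_left (by rw [htake_len]; omega)]
    rw [List.getElem_take]
    exact hLget k hk
  have hcase2 : ∀ k : ℕ, i ≤ k → k < j → M.getD k (e 1) =
      switchEdgeMap B A ((i : Fin n)) ((j : Fin n))
        s(((i + j - 1 - k : ℕ) : Fin n), ((i + j - 1 - k + 1 : ℕ) : Fin n)) := by
    intro k hk1 hk2
    have hk : k < n := by omega
    rw [List.getD_eq_getElem M (e 1) (by rw [hMlen]; omega)]
    rw [List.getElem_of_eq hM (by rw [hMlen]; omega)]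
    rw [List.getElem_map]
    congr 1
    rw [List.getElem_append_left (by rw [List.length_append, htake_len, hrev_len]; omega)]
    rw [List.getElem_append_right (by rw [htake_len]; omega)]
    rw [List.getElem_reverse]
    rw [List.getElem_take]
    rw [List.getElem_drop]
    rw [← hLget (i + j - 1 - k) (by omega)]
    refine hgetc _ _ ?_ _
    simp only [List.length_append, List.length_take, List.length_reverse,
      List.length_drop, hLlen, htake_len]
    omega
  have hcase3 : ∀ k : ℕ, j ≤ k → k < n → M.getD k (e 1) =
      switchEdgeMap B A ((i : Fin n)) ((j : Fin n))
        s(((k : ℕ) : Fin n), ((k + 1 : ℕ) : Fin n)) := by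
    intro k hk1 hk
    rw [List.getD_eq_getElem M (e 1) (by rw [hMlen]; omega)]
    rw [List.getElem_of_eq hM (by rw [hMlen]; omega)]
    rw [List.getElem_map]
    congr 1
    rw [List.getElem_append_right (by rw [List.length_append, htake_len, hrev_len]; omega)]
    rw [List.getElem_drop]
    rw [← hLget k hk]
    refine hgetc _ _ ?_ _
    simp only [List.length_append, List.length_take, List.length_reverse,
      List.length_drop, hLlen, htake_len]
    omega
  -- the vertex sequence w
  set w : ℕ → Fin n := fun k =>
    if i ≤ k ∧ k ≤ j then
      Equiv.swap ((i : Fin n)) ((j : Fin n)) ((i + j - k : ℕ) : Fin n)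
    else ((k : ℕ) : Fin n) with hw
  have hw1 : ∀ k : ℕ, ¬(i ≤ k ∧ k ≤ j) → w k = ((k : ℕ) : Fin n) := by
    intro k hk
    simp only [hw]
    rw [if_neg hk]
  have hw2 : ∀ k : ℕ, i ≤ k → k ≤ j → w k =
      Equiv.swap ((i : Fin n)) ((j : Fin n)) ((i + j - k : ℕ) : Fin n) := by
    intro k hk1 hk2
    simp only [hw]
    rw [if_pos ⟨hk1, hk2⟩]
  have hσj : Equiv.swap ((i : Fin n)) ((j : Fin n)) ((j : Fin n)) = ((i : Fin n)) :=
    Equiv.swap_apply_right _ _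
  have hMk : ∀ k : ℕ, k < n → M.getD k (e 1) = s(w k, w (k + 1)) := by
    intro k hk
    rcases Nat.lt_or_ge k i with hki | hki
    · -- k < i
      rw [hcase1 k hki]
      have hvk : (((k : ℕ) : Fin n)).val = k := Fin.val_cast_of_lt (by omega)
      have hvk1 : (((k + 1 : ℕ) : Fin n)).val = k + 1 := Fin.val_cast_of_lt (by omega)
      rw [hf_neg _ _ (by rw [hvk, hvk1]; omega)]
      have e1 : w k = ((k : ℕ) : Fin n) := hw1 k (by omega)
      have e2 : w (k + 1) = ((k + 1 : ℕ) : Fin n) := by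
        rcases Nat.lt_or_ge (k + 1) i with hk1i | hk1i
        · exact hw1 (k + 1) (by omega)
        · have hk1i' : k + 1 = i := by omega
          rw [hw2 (k + 1) (by omega) (by omega)]
          rw [show i + j - (k + 1) = j from by omega, hσj, hk1i']
      rw [e1, e2]
    rcases Nat.lt_or_ge k j with hkj | hkj
    · -- i ≤ k < j
      rw [hcase2 k hki hkj]
      have hvt : (((i + j - 1 - k : ℕ) : Fin n)).val = i + j - 1 - k :=
        Fin.val_cast_of_lt (by omega)
      rw [hf_pos _ _ (by
        rcases Nat.lt_or_ge (i + j - 1 - k) (i + 1) with ht | ht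
        · right
          rw [Fin.val_cast_of_lt (show i + j - 1 - k + 1 < n by omega)]
          omega
        · left; rw [hvt]; omega)]
      have e1 : w k = Equiv.swap ((i : Fin n)) ((j : Fin n)) ((i + j - 1 - k + 1 : ℕ) : Fin n) := by
        rw [hw2 k hki (by omega), show i + j - k = i + j - 1 - k + 1 from by omega]
      have e2 : w (k + 1) =
          Equiv.swap ((i : Fin n)) ((j : Fin n)) ((i + j - 1 - k : ℕ) : Fin n) := by
        rw [hw2 (k + 1) (by omega) (by omega),
          show i + j - (k + 1) = i + j - 1 - k from by omega]
      rw [e1, e2]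
      exact Sym2.eq_swap
    · -- j ≤ k < n
      rw [hcase3 k hkj hk]
      have hvk : (((k : ℕ) : Fin n)).val = k := Fin.val_cast_of_lt (by omega)
      have hvk1 : (((k + 1 : ℕ) : Fin n)).val = (k + 1) % n := Fin.val_natCast (k + 1) n
      rw [hf_neg _ _ (by
        rw [hvk, hvk1]
        rcases Nat.lt_or_ge (k + 1) n with hkn | hkn
        · rw [Nat.mod_eq_of_lt hkn]; omega
        · rw [show k + 1 = n from by omega, Nat.mod_self]; omega)]
      have e1 : w k = ((k : ℕ) : Fin n) := by
        rcases Nat.lt_or_ge j k with hjk | hjk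
        · exact hw1 k (by omega)
        · have hkj' : k = j := by omega
          rw [hw2 k (by omega) (by omega), show i + j - k = i from by omega, hσi, hkj']
      have e2 : w (k + 1) = ((k + 1 : ℕ) : Fin n) := hw1 (k + 1) (by omega)
      rw [e1, e2]
  have hw0 : w 0 = ((0 : ℕ) : Fin n) := hw1 0 (by omega)
  have hwn : w n = w 0 := by
    rcases Nat.lt_or_ge j n with hjn | hjn
    · rw [hw1 n (by omega), hw0, Fin.natCast_self, Nat.cast_zero]
    · have hjn' : j = n := by omega
      rw [hw2 n (by omega) (by omega), hw0]
      rw [show i + j - n = i from by omega, hσi, hjn', Fin.natCast_self, Nat.cast_zero]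
  intro k hk
  by_cases hk1 : k + 1 < n
  · rw [Nat.mod_eq_of_lt hk1, hMk k hk, hMk (k + 1) hk1]
    exact ⟨w (k + 1), by rw [Sym2.mem_iff]; right; rfl, by rw [Sym2.mem_iff]; left; rfl⟩
  · have hkn : k + 1 = n := by omega
    rw [hkn, Nat.mod_self, hMk k hk, hMk 0 (by omega)]
    refine ⟨w 0, ?_, by rw [Sym2.mem_iff]; left; rfl⟩
    rw [Sym2.mem_iff]
    right
    rw [hkn]
    exact hwn.symm
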